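/- For every configuration x ∈ ℕ^d and every word σ of Petri net actions, x ≥ H(σ) (componentwise) if, and only if, there exists a configuration y ∈ ℕ^d such that x →_σ y. -/
import Mathlib


/-- A configuration is a vector in `ℕ^d`. -/
abbrev Cfg (d : ℕ) := Fin d → ℕ

/-- A Petri net action is a pair of configurations. -/
abbrev PNAction (d : ℕ) := Cfg d × Cfg d

/-- Displacement of an action. -/
def disp {d : ℕ} (a : PNAction d) : Fin d → ℤ :=
  fun i => (a.2 i : ℤ) - (a.1 i : ℤ)

/-- Step relation of a single action. -/
def Step {d : ℕ} (a : PNAction d) (x y : Cfg d) : Prop :=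
  ∃ c : Cfg d, x = a.1 + c ∧ y = a.2 + c

/-- Step relation of a word of actions. -/
def Fires {d : ℕ} : List (PNAction d) → Cfg d → Cfg d → Prop
  | [], x, y => x = y
  | a :: σ, x, y => ∃ z, Step a x z ∧ Fires σ z y

/-- The hurdle of a word of Petri net actions: `H(ε) = 0` and
`H(aσ) = max{a₋, H(σ) − Δ(a)}` componentwise. -/
def hurdle {d : ℕ} : List (PNAction d) → Cfg d
  | [] => 0
  | a :: σ => fun i => (max ((a.1 i : ℤ)) ((hurdle σ i : ℤ) - disp a i)).toNat

/-- (Hack) For every configuration `x` and every word `σ` of Petri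
net actions, `x ≥ H(σ)` iff there exists a configuration `y` with `x →_σ y`. -/
theorem hurdle_characterization {d : ℕ} (x : Cfg d) (σ : List (PNAction d)) :
    hurdle σ ≤ x ↔ ∃ y : Cfg d, Fires σ x y := by
  induction σ generalizing x with
  | nil =>
    simp only [hurdle, Fires]
    constructor
    · intro _; exact ⟨x, rfl⟩
    · intro _ i; simp
  | cons a σ ih =>
    constructor
    · intro h
      have h1 : a.1 ≤ x := by
        intro i
        have hh := h i
        simp only [hurdle] at hh
        rw [Int.toNat_le] at hh
        exact_mod_cast le_trans (le_max_left _ _) hh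
      set z : Cfg d := fun i => x i - a.1 i + a.2 i with hz
      have hc : x = a.1 + (fun i => x i - a.1 i) := by
        funext i; simp [Nat.add_sub_cancel' (h1 i)]
      have hstep : Step a x z := by
        refine ⟨fun i => x i - a.1 i, hc, ?_⟩
        funext i; simp [hz, Nat.add_comm]
      have hσ : hurdle σ ≤ z := by
        intro i
        have hh := h i
        simp only [hurdle] at hh
        have hle : max ((a.1 i : ℤ)) ((hurdle σ i : ℤ) - disp a i) ≤ (x i : ℤ) := by
          rw [← Int.toNat_le] at *
          exact hh
        have h2 : (hurdle σ i : ℤ) - disp a i ≤ (x i : ℤ) := le_trans (le_max_right _ _) hle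
        have : (hurdle σ i : ℤ) ≤ (x i : ℤ) + disp a i := by linarith
        have hzi : (z i : ℤ) = (x i : ℤ) + disp a i := by
          simp only [hz, disp]
          push_cast [Int.ofNat_sub (h1 i)]
          ring
        rw [← hzi] at this
        exact_mod_cast this
      obtain ⟨y, hy⟩ := (ih z).mp hσ
      exact ⟨y, z, hstep, hy⟩
    · rintro ⟨y, z, ⟨c, hxc, hzc⟩, hfy⟩
      intro i
      have h1 : a.1 i ≤ x i := by rw [hxc]; simp [Pi.add_apply]
      have hσ : hurdle σ ≤ z := (ih z).mpr ⟨y, hfy⟩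
      have hzi : (z i : ℤ) = (x i : ℤ) + disp a i := by
        rw [hxc, hzc]; simp [disp, Pi.add_apply]; ring
      have h2 : (hurdle σ i : ℤ) - disp a i ≤ (x i : ℤ) := by
        have := hσ i
        have : (hurdle σ i : ℤ) ≤ (z i : ℤ) := by exact_mod_cast this
        rw [hzi] at this; linarith
      simp only [hurdle]
      rw [Int.toNat_le]
      exact max_le (by exact_mod_cast h1) h2
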